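/- Fix M₀ > 1. Define recursively a₁ := 1 and a_{n+1} := M₀ · (a_n + (⌊a_n⌋ + 1)!), and let D_n := { a_n + j : j = 0, 1, …, (⌊a_n⌋ + 1)! }. Let Λ = (λ_n)_{n≥1} be the increasing enumeration of ⋃_{n=1}^{∞} D_n. Then Λ satisfies condition (Σ): for every M > 0 there exists a subsequence (μ_n) of Λ such that μ_{n+1} − μ_n > M for every n and ∑_{n=1}^{∞} 1/μ_n = +∞. -/

import Mathlib

open Filter Topology

set_option maxHeartbeats 1000000

/-- The block `D n = { a n + j : j = 0, 1, …, (⌊a n⌋ + 1)! }`. -/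
def blockD (a : ℕ → ℝ) (n : ℕ) : Set ℝ :=
  {x : ℝ | ∃ j : ℕ, j ≤ Nat.factorial (Nat.floor (a n) + 1) ∧ x = a n + j}

theorem block_sequence_satisfies_CondSigma
    (M₀ : ℝ) (hM₀ : 1 < M₀)
    (a : ℕ → ℝ) (ha1 : a 1 = 1)
    (harec : ∀ n : ℕ, 1 ≤ n →
      a (n + 1) = M₀ * (a n + (Nat.factorial (Nat.floor (a n) + 1) : ℝ)))
    (l : ℕ → ℝ) (hmono : StrictMono l)
    (hrange : Set.range l = ⋃ n ∈ {n : ℕ | 1 ≤ n}, blockD a n) :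
    ∀ M : ℝ, 0 < M → ∃ φ : ℕ → ℕ, StrictMono φ ∧
      (∀ n, l (φ (n + 1)) - l (φ n) > M) ∧
      Filter.Tendsto (fun N => ∑ n ∈ Finset.range N, (l (φ n))⁻¹)
        Filter.atTop Filter.atTop := by
  intro M hM
  set K : ℕ → ℕ := fun n => Nat.factorial (Nat.floor (a n) + 1) with hK
  have hKpos : ∀ n, 0 < K n := fun n => Nat.factorial_pos _
  have hKa : ∀ n, a n < (K n : ℝ) := by
    intro n
    have h1 : a n < (Nat.floor (a n) : ℝ) + 1 := Nat.lt_floor_add_one _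
    have h2 : (Nat.floor (a n) + 1 : ℕ) ≤ K n := Nat.self_le_factorial _
    calc a n < ((Nat.floor (a n) + 1 : ℕ) : ℝ) := by push_cast; linarith
      _ ≤ (K n : ℝ) := by exact_mod_cast h2
  have hKnn : ∀ n, (0:ℝ) ≤ (K n : ℝ) := fun n => Nat.cast_nonneg _
  have harec' : ∀ n, 1 ≤ n → a (n + 1) = M₀ * (a n + (K n : ℝ)) := by
    intro n hn; rw [harec n hn]
  -- a n ≥ 1 for n ≥ 1
  have ha1' : ∀ n, 1 ≤ n → 1 ≤ a n := by
    have key : ∀ m : ℕ, 1 ≤ a (m + 1) := by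
      intro m
      induction m with
      | zero => simp [ha1]
      | succ m ih =>
        have h := harec' (m + 1) (by omega)
        have := hKnn (m + 1)
        nlinarith
    intro n hn
    obtain ⟨m, rfl⟩ := Nat.exists_eq_add_of_le hn
    simpa [Nat.add_comm] using key m
  have hstep : ∀ n, 1 ≤ n → a n + (K n : ℝ) < a (n + 1) := by
    intro n hn
    have h := harec' n hn
    have h1 := ha1' n hn
    have h2 := hKnn n
    nlinarith
  have hlt : ∀ n, 1 ≤ n → a n < a (n + 1) := by
    intro n hn
    have := hstep n hn
    have := hKnn n
    linarith
  have ha_mono : ∀ m n, 1 ≤ m → m ≤ n → a m ≤ a n := by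
    intro m n hm hmn
    obtain ⟨k, rfl⟩ := Nat.exists_eq_add_of_le hmn
    clear hmn
    induction k with
    | zero => simp
    | succ k ih =>
      have h1 : a (m + k) < a (m + k + 1) := hlt (m + k) (by omega)
      have h2 : m + (k + 1) = (m + k) + 1 := by omega
      rw [h2]
      linarith
  -- membership characterization
  have hmem : ∀ x : ℝ, (∃ i, l i = x) ↔ ∃ n, 1 ≤ n ∧ ∃ j : ℕ, j ≤ K n ∧ x = a n + j := by
    intro x
    have h1 : x ∈ Set.range l ↔ x ∈ ⋃ n ∈ {n : ℕ | 1 ≤ n}, blockD a n := by rw [hrange]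
    simpa [blockD, hK, Set.mem_iUnion, Set.mem_range, Set.mem_setOf_eq] using h1
  have hl_mem : ∀ i, ∃ n, 1 ≤ n ∧ ∃ j : ℕ, j ≤ K n ∧ l i = a n + j :=
    fun i => (hmem (l i)).mp ⟨i, rfl⟩
  have hmemr : ∀ n, 1 ≤ n → ∀ j : ℕ, j ≤ K n → ∃ i, l i = a n + j :=
    fun n hn j hj => (hmem _).mpr ⟨n, hn, j, hj, rfl⟩
  have hl_ge1 : ∀ i, 1 ≤ l i := by
    intro i
    obtain ⟨n, hn, j, hj, hij⟩ := hl_mem i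
    have := ha1' n hn
    have : (0:ℝ) ≤ (j:ℝ) := Nat.cast_nonneg _
    rw [hij]
    linarith [ha1' n hn]
  -- a is unbounded
  have hgrow : ∀ k : ℕ, 1 + k * (M₀ - 1) ≤ a (1 + k) := by
    intro k
    induction k with
    | zero => simp [ha1]
    | succ k ih =>
      have h1 : 1 + (k + 1) = (1 + k) + 1 := by omega
      rw [h1]
      have h := harec' (1 + k) (by omega)
      have h2 := hKnn (1 + k)
      have h3 := ha1' (1 + k) (by omega)
      push_cast
      nlinarith
  have haunb : ∀ t : ℝ, ∃ n, 1 ≤ n ∧ t < a n := by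
    intro t
    obtain ⟨k, hk⟩ := exists_nat_gt ((t - 1) / (M₀ - 1))
    refine ⟨1 + k, by omega, ?_⟩
    have h1 : t - 1 < k * (M₀ - 1) := by
      have := (div_lt_iff₀ (by linarith : (0:ℝ) < M₀ - 1)).mp hk
      linarith
    have := hgrow k
    linarith
  have hunb : ∀ t : ℝ, ∃ i, t < l i := by
    intro t
    obtain ⟨n, hn, hna⟩ := haunb t
    obtain ⟨i, hi⟩ := hmemr n hn 0 (Nat.zero_le _)
    refine ⟨i, ?_⟩
    rw [hi]; push_cast; linarith
  -- choose n₀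
  obtain ⟨n₀, hn₀1, hn₀M⟩ := haunb (M / (M₀ - 1))
  have hMj : ∀ j, n₀ ≤ j → M < (M₀ - 1) * a j := by
    intro j hj
    have h1 : a n₀ ≤ a j := ha_mono n₀ j hn₀1 hj
    have h2 : M < (M₀ - 1) * a n₀ := by
      have := (div_lt_iff₀ (by linarith : (0:ℝ) < M₀ - 1)).mp hn₀M
      linarith
    nlinarith
  -- the step size
  obtain ⟨s, hs_def⟩ : ∃ s : ℕ, s = Nat.floor M + 1 := ⟨_, rfl⟩
  have hspos : 0 < s := by omega
  have hs1 : M < (s : ℝ) := by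
    have := Nat.lt_floor_add_one M
    rw [hs_def]
    push_cast
    linarith
  have hs2 : (s : ℝ) ≤ M + 1 := by
    have := Nat.floor_le hM.le
    rw [hs_def]
    push_cast
    linarith
  have hs1' : M < (Nat.floor M : ℝ) + 1 := Nat.lt_floor_add_one M
  have hs2' : (Nat.floor M : ℝ) ≤ M := Nat.floor_le hM.le
  -- define φ
  obtain ⟨i₀, hi₀⟩ : ∃ i, l i = a n₀ := by
    obtain ⟨i, hi⟩ := hmemr n₀ hn₀1 0 (Nat.zero_le _)
    exact ⟨i, by rw [hi]; push_cast; ring⟩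
  obtain ⟨φ, hφz, hφsucc⟩ : ∃ φ : ℕ → ℕ, φ 0 = i₀ ∧
      ∀ n, φ (n + 1) = Nat.find (hunb (l (φ n) + M)) :=
    ⟨fun n => Nat.rec i₀ (fun _ prev => Nat.find (hunb (l prev + M))) n, rfl, fun n => rfl⟩
  have hφ0 : l (φ 0) = a n₀ := by rw [hφz]; exact hi₀
  have hφspec : ∀ n, l (φ n) + M < l (φ (n + 1)) := by
    intro n; rw [hφsucc n]; exact Nat.find_spec (hunb (l (φ n) + M))
  have hφmin : ∀ n i, l (φ n) + M < l i → φ (n + 1) ≤ i := by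
    intro n i hi; rw [hφsucc n]; exact Nat.find_min' (hunb (l (φ n) + M)) hi
  have hφmono : StrictMono φ := by
    apply strictMono_nat_of_lt_succ
    intro n
    have h := hφspec n
    have : l (φ n) < l (φ (n + 1)) := by linarith
    exact hmono.lt_iff_lt.mp this
  -- the key decomposition step
  have hdecomp : ∀ n j r, n₀ ≤ j → r ≤ K j → l (φ n) = a j + (r : ℝ) →
      (r + s ≤ K j ∧ l (φ (n + 1)) = a j + ((r + s : ℕ) : ℝ)) ∨
      (K j < r + s ∧ l (φ (n + 1)) = a (j + 1)) := by
    intro n j r hj hr heq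
    have hj1 : 1 ≤ j := le_trans hn₀1 hj
    obtain ⟨j', hj'1, r', hr', heq'⟩ := hl_mem (φ (n + 1))
    have hgt : a j + (r : ℝ) + M < l (φ (n + 1)) := by
      have := hφspec n; rw [heq] at this; linarith
    have hrR : (r : ℝ) ≤ (K j : ℝ) := by exact_mod_cast hr
    have hr'R : (r' : ℝ) ≤ (K j' : ℝ) := by exact_mod_cast hr'
    have hrnn : (0:ℝ) ≤ (r : ℝ) := Nat.cast_nonneg _
    have hr'nn : (0:ℝ) ≤ (r' : ℝ) := Nat.cast_nonneg _
    by_cases hcase : r + s ≤ K j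
    · left
      refine ⟨hcase, ?_⟩
      obtain ⟨i₁, hi₁⟩ := hmemr j hj1 (r + s) hcase
      have hub : l (φ (n + 1)) ≤ a j + ((r + s : ℕ) : ℝ) := by
        rw [← hi₁]
        apply hmono.monotone
        apply hφmin
        rw [heq, hi₁]
        push_cast
        linarith
      have hcR : ((r + s : ℕ) : ℝ) ≤ (K j : ℝ) := by exact_mod_cast hcase
      have hj'E : j' = j := by
        rcases lt_trichotomy j' j with h | h | h
        · exfalso
          have h1 : a (j' + 1) ≤ a j := ha_mono (j' + 1) j (by omega) (by omega)
          have h2 : a j' + (K j' : ℝ) < a (j' + 1) := hstep j' hj'1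
          rw [heq'] at hgt
          linarith
        · exact h
        · exfalso
          have h1 : a (j + 1) ≤ a j' := ha_mono (j + 1) j' (by omega) (by omega)
          have h2 : a j + (K j : ℝ) < a (j + 1) := hstep j hj1
          rw [heq'] at hub
          linarith
      subst hj'E
      rw [heq'] at hub hgt ⊢
      have h5 : (r' : ℝ) ≤ ((r + s : ℕ) : ℝ) := by linarith
      have h6 : (r : ℝ) + M < (r' : ℝ) := by linarith
      have h7 : r + s ≤ r' := by
        have hx : ((r + s : ℕ) : ℝ) < (r' : ℝ) + 1 := by push_cast; linarith
        have hx2 : r + s < r' + 1 := by exact_mod_cast hx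
        omega
      have h8 : r' ≤ r + s := by exact_mod_cast h5
      have : r' = r + s := le_antisymm h8 h7
      rw [this]
    · right
      push_neg at hcase
      refine ⟨hcase, ?_⟩
      have hKrM : (K j : ℝ) ≤ (r : ℝ) + M := by
        have h1 : K j ≤ r + Nat.floor M := by omega
        have h2 : ((K j : ℕ) : ℝ) ≤ ((r + Nat.floor M : ℕ) : ℝ) := by exact_mod_cast h1
        have h3 := Nat.floor_le hM.le
        push_cast at h2
        linarith
      obtain ⟨i₁, hi₁⟩ := hmemr (j + 1) (by omega) 0 (Nat.zero_le _)
      have hi₁' : l i₁ = a (j + 1) := by rw [hi₁]; push_cast; ring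
      have hy : a j + (r : ℝ) + M < a (j + 1) := by
        have h := harec' j hj1
        have hMd := hMj j hj
        nlinarith [hKnn j]
      have hub : l (φ (n + 1)) ≤ a (j + 1) := by
        rw [← hi₁']
        apply hmono.monotone
        apply hφmin
        rw [heq, hi₁']
        linarith
      rcases lt_trichotomy j' j with h | h | h
      · exfalso
        have h1 : a (j' + 1) ≤ a j := ha_mono (j' + 1) j (by omega) (by omega)
        have h2 : a j' + (K j' : ℝ) < a (j' + 1) := hstep j' hj'1
        rw [heq'] at hgt
        linarith
      · exfalso
        subst h
        rw [heq'] at hgt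
        linarith
      · have h1 : a (j + 1) ≤ a j' := ha_mono (j + 1) j' (by omega) (by omega)
        rw [heq'] at hub ⊢
        linarith
  -- traversing one block
  have hblock : ∀ j, n₀ ≤ j → ∀ N, l (φ N) = a j →
      ∃ T : ℕ, l (φ (N + T + 1)) = a (j + 1) ∧
        (1 : ℝ) / (2 * s) ≤ ∑ n ∈ Finset.Ico N (N + T + 1), (l (φ n))⁻¹ := by
    intro j hj N hN
    have hj1 : 1 ≤ j := le_trans hn₀1 hj
    have hchain : ∀ t : ℕ, t * s ≤ K j → l (φ (N + t)) = a j + ((t * s : ℕ) : ℝ) := by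
      intro t
      induction t with
      | zero => intro _; simpa using hN
      | succ t ih =>
        intro ht
        have hts : (t + 1) * s = t * s + s := by ring
        have ht' : t * s ≤ K j := by omega
        have h1 := ih ht'
        rcases hdecomp (N + t) j (t * s) hj ht' h1 with ⟨h2, h3⟩ | ⟨h2, h3⟩
        · have hE : N + (t + 1) = N + t + 1 := by omega
          rw [hE, h3, ← hts]
        · omega
    obtain ⟨T, hTdef⟩ : ∃ T, T = K j / s := ⟨_, rfl⟩
    have hTs : T * s ≤ K j := by rw [hTdef]; exact Nat.div_mul_le_self _ _
    have hTs2 : K j < T * s + s := by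
      rw [hTdef]
      have h1 := Nat.div_add_mod (K j) s
      have h2 := Nat.mod_lt (K j) hspos
      have h3 : s * (K j / s) = K j / s * s := Nat.mul_comm _ _
      omega
    have hlast := hchain T hTs
    rcases hdecomp (N + T) j (T * s) hj hTs hlast with ⟨h2, _⟩ | ⟨_, h3⟩
    · exact absurd h2 (not_le.mpr hTs2)
    · refine ⟨T, h3, ?_⟩
      have hKjR : (0:ℝ) < (K j : ℝ) := by exact_mod_cast hKpos j
      have haK := hKa j
      have hterm : ∀ n ∈ Finset.Ico N (N + T + 1), (2 * (K j : ℝ))⁻¹ ≤ (l (φ n))⁻¹ := by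
        intro n hn
        rw [Finset.mem_Ico] at hn
        have htT : n - N ≤ T := by omega
        have hts : (n - N) * s ≤ K j := le_trans (Nat.mul_le_mul_right _ htT) hTs
        have hv := hchain (n - N) hts
        have hE : N + (n - N) = n := by omega
        rw [hE] at hv
        rw [hv]
        have hc : (((n - N) * s : ℕ) : ℝ) ≤ (K j : ℝ) := by exact_mod_cast hts
        have hpos : (0:ℝ) < a j + (((n - N) * s : ℕ) : ℝ) := by
          have := ha1' j hj1
          have : (0:ℝ) ≤ (((n - N) * s : ℕ) : ℝ) := Nat.cast_nonneg _
          linarith [ha1' j hj1]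
        have hle : a j + (((n - N) * s : ℕ) : ℝ) ≤ 2 * (K j : ℝ) := by linarith
        exact inv_anti₀ hpos hle
      have hsum := Finset.card_nsmul_le_sum (Finset.Ico N (N + T + 1)) _ _ hterm
      rw [Nat.card_Ico] at hsum
      have hcard : N + T + 1 - N = T + 1 := by omega
      rw [hcard, nsmul_eq_mul] at hsum
      have hTs2R : (K j : ℝ) < ((T : ℝ) + 1) * (s : ℝ) := by
        have h4 : K j < (T + 1) * s := by
          have h5 : (T + 1) * s = T * s + s := Nat.succ_mul _ _
          omega
        have h5 : ((K j : ℕ) : ℝ) < (((T + 1) * s : ℕ) : ℝ) := by exact_mod_cast h4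
        push_cast at h5
        linarith
      have hsR : (0:ℝ) < (s : ℝ) := by exact_mod_cast hspos
      have hfinal : (1 : ℝ) / (2 * s) ≤ ((T + 1 : ℕ) : ℝ) * (2 * (K j : ℝ))⁻¹ := by
        have h6 : ((T + 1 : ℕ) : ℝ) = (T : ℝ) + 1 := by push_cast; ring
        have h7 : (0:ℝ) < 2 * (s : ℝ) := by linarith
        have h8 : (0:ℝ) < 2 * (K j : ℝ) := by linarith
        rw [h6, ← div_eq_mul_inv, div_le_div_iff₀ h7 h8]
        have h9 : ((T : ℝ) + 1) * (2 * (s:ℝ)) = 2 * (((T:ℝ) + 1) * (s:ℝ)) := by ring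
        linarith
      linarith
  -- the main induction
  have hP : ∀ k : ℕ, ∃ N, l (φ N) = a (n₀ + k) ∧
      (k : ℝ) / (2 * s) ≤ ∑ n ∈ Finset.range N, (l (φ n))⁻¹ := by
    intro k
    induction k with
    | zero => exact ⟨0, by simpa using hφ0, by simp⟩
    | succ k ih =>
      obtain ⟨N, h1, h2⟩ := ih
      obtain ⟨T, h3, h4⟩ := hblock (n₀ + k) (Nat.le_add_right _ _) N h1
      refine ⟨N + T + 1, by rw [show n₀ + (k + 1) = (n₀ + k) + 1 by omega]; exact h3, ?_⟩
      have hsplit : ∑ n ∈ Finset.range (N + T + 1), (l (φ n))⁻¹ =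
          ∑ n ∈ Finset.range N, (l (φ n))⁻¹ + ∑ n ∈ Finset.Ico N (N + T + 1), (l (φ n))⁻¹ := by
        rw [Finset.range_eq_Ico, Finset.range_eq_Ico]
        exact (Finset.sum_Ico_consecutive (fun n => (l (φ n))⁻¹) (Nat.zero_le N)
          (by omega : N ≤ N + T + 1)).symm
      rw [hsplit]
      have hid : ((k : ℝ) + 1) / (2 * s) = (k : ℝ) / (2 * s) + 1 / (2 * s) := by ring
      push_cast
      rw [hid]
      linarith
  -- conclude
  refine ⟨φ, hφmono, fun n => by have := hφspec n; linarith, ?_⟩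
  have hmonoS : Monotone (fun N => ∑ n ∈ Finset.range N, (l (φ n))⁻¹) := by
    intro m n hmn
    apply Finset.sum_le_sum_of_subset_of_nonneg (Finset.range_subset_range.mpr hmn)
    intro i _ _
    have h := hl_ge1 (φ i)
    exact inv_nonneg.mpr (by linarith)
  apply tendsto_atTop_atTop_of_monotone hmonoS
  intro b
  have hsR : (0:ℝ) < 2 * (s : ℝ) := by
    have : (0:ℝ) < (s : ℝ) := by exact_mod_cast hspos
    linarith
  obtain ⟨k, hk⟩ := exists_nat_ge (b * (2 * s))
  obtain ⟨N, _, h2⟩ := hP k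
  refine ⟨N, le_trans ?_ h2⟩
  rw [le_div_iff₀ hsR]
  linarith
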